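/- Let (X,d) be a sequentially Yoneda-complete T1 bounded quasi-metric space. Then D is a quasi-metric on CBX (it satisfies the triangle inequality, and D(I,J) = D(J,I) = 0 implies I = J), and moreover for all I, J ∈ CBX, D(I,J) = 0 if and only if I ⊑ J; hence the specialization order induced by D on CBX coincides with the partial order ⊑ of CBX. -/
import Mathlib


open scoped NNReal

/-! Generic sequence notions for an arbitrary "distance" function `ρ`. -/

def IsCauchySeq {α : Type _} (ρ : α → α → ℝ) (u : ℕ → α) : Prop :=
  ∀ ε : ℝ, 0 < ε → ∃ N, ∀ n m, N ≤ n → n ≤ m → ρ (u n) (u m) < ε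

def IsBiCauchySeq {α : Type _} (ρ : α → α → ℝ) (u : ℕ → α) : Prop :=
  ∀ ε : ℝ, 0 < ε → ∃ N, ∀ n m, N ≤ n → N ≤ m → ρ (u n) (u m) < ε

/-- `sup_{m ≥ n} ρ (u m) y`. -/
noncomputable def supTail {α : Type _} (ρ : α → α → ℝ) (u : ℕ → α) (y : α) (n : ℕ) : ℝ :=
  sSup {t | ∃ m, n ≤ m ∧ t = ρ (u m) y}

/-- `x` is a Yoneda limit of `u`:  `ρ x y = inf_n sup_{m ≥ n} ρ (u m) y` for all `y`. -/
def IsYonedaLim {α : Type _} (ρ : α → α → ℝ) (u : ℕ → α) (x : α) : Prop :=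
  ∀ y, ρ x y = sInf (Set.range (supTail ρ u y))

def SeqYonedaCompleteD {α : Type _} (ρ : α → α → ℝ) : Prop :=
  ∀ u, IsCauchySeq ρ u → ∃ x, IsYonedaLim ρ u x

/-- Smyth completeness: every Cauchy sequence converges in the symmetrized metric. -/
def SmythCompleteD {α : Type _} (ρ : α → α → ℝ) : Prop :=
  ∀ u, IsCauchySeq ρ u → ∃ x, ∀ ε : ℝ, 0 < ε → ∃ N, ∀ n, N ≤ n →
    max (ρ x (u n)) (ρ (u n) x) < ε

/-- `inf_{m ≥ n} ρ e (u m)`. -/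
noncomputable def infTail {α : Type _} (ρ : α → α → ℝ) (u : ℕ → α) (e : α) (n : ℕ) : ℝ :=
  sInf {t | ∃ m, n ≤ m ∧ t = ρ e (u m)}

/-- `e` is a finite point: for every Cauchy sequence `u` with Yoneda limit `x`,
`ρ e x = sup_n inf_{m ≥ n} ρ e (u m)`. -/
def IsFinitePoint {α : Type _} (ρ : α → α → ℝ) (e : α) : Prop :=
  ∀ u x, IsCauchySeq ρ u → IsYonedaLim ρ u x →
    ρ e x = sSup (Set.range (infTail ρ u e))

/-- ω-algebraic: a countable set of finite points such that every point is a Yoneda limit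
of a Cauchy sequence of points from it. -/
def OmegaAlgebraicD {α : Type _} (ρ : α → α → ℝ) : Prop :=
  ∃ X0 : Set α, X0.Countable ∧ (∀ e ∈ X0, IsFinitePoint ρ e) ∧
    ∀ x, ∃ u : ℕ → α, (∀ n, u n ∈ X0) ∧ IsCauchySeq ρ u ∧ IsYonedaLim ρ u x

/-- A quasi-metric on `X`. -/
structure QuasiMetric (X : Type _) : Type _ where
  d : X → X → ℝ
  nonneg : ∀ x y, 0 ≤ d x y
  triangle : ∀ x y z, d x z ≤ d x y + d y z
  eq_iff : ∀ x y, x = y ↔ d x y = 0 ∧ d y x = 0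

/-- Formal balls over `X`. -/
abbrev FB (X : Type _) := X × ℝ≥0

/-- Nonempty finite subsets of the space of formal balls. -/
def PFin (X : Type _) : Type _ := {F : Set (FB X) // F.Finite ∧ F.Nonempty}

namespace QuasiMetric

variable {X : Type _} (Q : QuasiMetric X)

def IsT1 : Prop := ∀ x y, Q.d x y = 0 → x = y

def Bounded : Prop := ∃ C : ℝ, ∀ x y, Q.d x y ≤ C

def ball (x : X) (ε : ℝ) : Set X := {y | Q.d x y < ε}

/-- The topology `τ_d` induced by the quasi-metric. -/
def tau : TopologicalSpace X :=
  TopologicalSpace.generateFrom {s | ∃ x ε, 0 < ε ∧ s = Q.ball x ε}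

def dstar (x y : X) : ℝ := max (Q.d x y) (Q.d y x)

def SeqYonedaComplete : Prop := SeqYonedaCompleteD Q.d

def SmythComplete : Prop := SmythCompleteD Q.d

/-- `K` is `d⁻¹`-precompact. -/
def dInvPrecompact (K : Set X) : Prop :=
  ∀ ε : ℝ, 0 < ε → ∃ F : Set X, F.Finite ∧ F ⊆ K ∧ ∀ k ∈ K, ∃ x ∈ F, Q.d k x < ε

/-- The nonempty compact subsets of `(X, τ_d)`. -/
def K0 : Set (Set X) := {K | K.Nonempty ∧ @IsCompact X Q.tau K}

noncomputable def dPtSet (x : X) (B : Set X) : ℝ := sInf {t | ∃ b ∈ B, t = Q.d x b}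

noncomputable def dSetPt (A : Set X) (y : X) : ℝ := sInf {t | ∃ a ∈ A, t = Q.d a y}

/-- The Hausdorff quasi-metric. -/
noncomputable def Hd (A B : Set X) : ℝ :=
  max (sSup {t | ∃ b ∈ B, t = Q.dSetPt A b}) (sSup {t | ∃ a ∈ A, t = Q.dPtSet a B})

/-- Order on formal balls: `(x,r) ⊑ (y,s)  ↔  d x y ≤ r - s`. -/
def ble (a b : FB X) : Prop := Q.d a.1 b.1 ≤ (a.2 : ℝ) - (b.2 : ℝ)

/-- Auxiliary relation: `(x,r) ≺ (y,s)  ↔  d x y < r - s`. -/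
def blt (a b : FB X) : Prop := Q.d a.1 b.1 < (a.2 : ℝ) - (b.2 : ℝ)

def iota (x : X) : FB X := (x, 0)

/-- The quasi-metric `q` on formal balls. -/
noncomputable def q (a b : FB X) : ℝ :=
  max (Q.d a.1 b.1) |(a.2 : ℝ) - (b.2 : ℝ)| + ((b.2 : ℝ) - (a.2 : ℝ))

/-- The Egli–Milner relation `≺_EM` on nonempty finite sets of formal balls. -/
def em (F G : PFin X) : Prop :=
  (∀ b ∈ G.1, ∃ a ∈ F.1, Q.blt a b) ∧ (∀ a ∈ F.1, ∃ b ∈ G.1, Q.blt a b)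

/-- The non-strict Egli–Milner relation `⊑_EM`. -/
def emLE (F G : PFin X) : Prop :=
  (∀ a ∈ F.1, ∃ b ∈ G.1, Q.ble a b) ∧ (∀ b ∈ G.1, ∃ a ∈ F.1, Q.ble a b)

/-- `rF = max { r : (x,r) ∈ F }`. -/
noncomputable def rF (F : PFin X) : ℝ := sSup {t | ∃ p ∈ F.1, t = (p.2 : ℝ)}

/-- `δ(F,G) = min {(r-s) - d x y : (x,r) ∈ F, (y,s) ∈ G, (x,r) ≺ (y,s)}`. -/
noncomputable def delta (F G : PFin X) : ℝ :=
  sInf {t | ∃ a ∈ F.1, ∃ b ∈ G.1, Q.blt a b ∧ t = ((a.2 : ℝ) - (b.2 : ℝ)) - Q.d a.1 b.1}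

/-- The Hausdorff quasi-metric `H_q` on `P_fin(BX)` induced by `q`. -/
noncomputable def Hq (F G : PFin X) : ℝ :=
  max (sSup {t | ∃ a ∈ F.1, t = sInf {s | ∃ b ∈ G.1, s = Q.q a b}})
      (sSup {t | ∃ b ∈ G.1, t = sInf {s | ∃ a ∈ F.1, s = Q.q a b}})

/-- ω-chains in `(P_fin(BX), ≺_EM)`; `c n` plays the role of `F_{n+1}`. -/
def Chain : Type _ := {c : ℕ → PFin X // ∀ n, Q.em (c n) (c (n + 1))}

def chainLE (c c' : Q.Chain) : Prop := ∀ n, ∃ m, Q.em (c.1 n) (c'.1 m)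

def chainEquiv (c c' : Q.Chain) : Prop := Q.chainLE c c' ∧ Q.chainLE c' c

lemma blt_trans {a b c : FB X} (h1 : Q.blt a b) (h2 : Q.blt b c) : Q.blt a c := by
  have h3 := Q.triangle a.1 b.1 c.1
  unfold blt at h1 h2 ⊢
  linarith

lemma em_trans {F G H : PFin X} (h1 : Q.em F G) (h2 : Q.em G H) : Q.em F H := by
  constructor
  · intro b hb
    obtain ⟨a, ha, hab⟩ := h2.1 b hb
    obtain ⟨a', ha', h'⟩ := h1.1 a ha
    exact ⟨a', ha', Q.blt_trans h' hab⟩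
  · intro a ha
    obtain ⟨b, hb, hab⟩ := h1.2 a ha
    obtain ⟨c, hc, hbc⟩ := h2.2 b hb
    exact ⟨c, hc, Q.blt_trans hab hbc⟩

lemma chainLE_refl (c : Q.Chain) : Q.chainLE c c := fun n => ⟨n + 1, c.2 n⟩

lemma chainLE_trans {a b c : Q.Chain} (h1 : Q.chainLE a b) (h2 : Q.chainLE b c) :
    Q.chainLE a c := by
  intro n
  obtain ⟨m, hm⟩ := h1 n
  obtain ⟨k, hk⟩ := h2 m
  exact ⟨k, Q.em_trans hm hk⟩

def chainSetoid : Setoid Q.Chain where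
  r := Q.chainEquiv
  iseqv := ⟨fun c => ⟨Q.chainLE_refl c, Q.chainLE_refl c⟩,
    fun h => ⟨h.2, h.1⟩,
    fun h1 h2 => ⟨Q.chainLE_trans h1.1 h2.1, Q.chainLE_trans h2.2 h1.2⟩⟩

/-- The ω-Plotkin domain `CBX`: equivalence classes of ω-chains in `(P_fin(BX), ≺_EM)`. -/
def CBX : Type _ := Quotient Q.chainSetoid

/-- The partial order of `CBX`. -/
def cbLE : Q.CBX → Q.CBX → Prop :=
  Quotient.lift₂ Q.chainLE (by
    intro a b a' b' ha hb
    have ha' : Q.chainEquiv a a' := ha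
    have hb' : Q.chainEquiv b b' := hb
    exact propext ⟨fun h => Q.chainLE_trans (Q.chainLE_trans ha'.2 h) hb'.1,
      fun h => Q.chainLE_trans (Q.chainLE_trans ha'.1 h) hb'.2⟩)

def chainWB (c c' : Q.Chain) : Prop := ∃ m, ∀ n, Q.em (c.1 n) (c'.1 m)

/-- The way-below relation of `CBX`. -/
def cbWB : Q.CBX → Q.CBX → Prop :=
  Quotient.lift₂ Q.chainWB (by
    intro a b a' b' ha hb
    have ha' : Q.chainEquiv a a' := ha
    have hb' : Q.chainEquiv b b' := hb
    apply propext
    constructor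
    · rintro ⟨m, hm⟩
      obtain ⟨k, hk⟩ := hb'.1 m
      refine ⟨k, fun n => ?_⟩
      obtain ⟨p, hp⟩ := ha'.2 n
      exact Q.em_trans hp (Q.em_trans (hm p) hk)
    · rintro ⟨m, hm⟩
      obtain ⟨k, hk⟩ := hb'.2 m
      refine ⟨k, fun n => ?_⟩
      obtain ⟨p, hp⟩ := ha'.1 n
      exact Q.em_trans hp (Q.em_trans (hm p) hk))

/-- The Scott topology of `CBX`, generated by the sets `↟I`. -/
def scottTop : TopologicalSpace Q.CBX :=
  TopologicalSpace.generateFrom {s | ∃ I : Q.CBX, s = {J | Q.cbWB I J}}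

def upSet (F : PFin X) : Set (FB X) := {b | ∃ a ∈ F.1, Q.ble a b}

/-- `I⁺ = ⋂_n ↑F_n` for a representing chain. -/
def Iplus (c : Q.Chain) : Set (FB X) := ⋂ n, Q.upSet (c.1 n)

noncomputable def IplusQ (I : Q.CBX) : Set (FB X) := Q.Iplus (Quotient.out I)

/-- `r̄ I = inf { rF : F occurs in some chain representing I }`. -/
noncomputable def rbar (I : Q.CBX) : ℝ :=
  sInf {t | ∃ c : Q.Chain, Quotient.mk Q.chainSetoid c = I ∧ ∃ n, t = rF (c.1 n)}

/-- `c` is a standard representation of `K`: `c n` (playing the role of `F_{n+1}`) is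
`{(x_i^j, 1/(n+1)) : 1 ≤ j ≤ n+1, 1 ≤ i ≤ m_j}` where the `x_i^j ∈ K` satisfy
`∀ y ∈ K, ∃ i, d (x_i^j) y < 1/(2 j²)`. -/
def IsStdRep (K : Set X) (c : Q.Chain) : Prop :=
  ∃ (m : ℕ → ℕ) (x : ℕ → ℕ → X),
    (∀ j i, 1 ≤ j → 1 ≤ i → i ≤ m j → x j i ∈ K) ∧
    (∀ j, 1 ≤ j → ∀ y ∈ K, ∃ i, 1 ≤ i ∧ i ≤ m j ∧ Q.d (x j i) y < 1 / (2 * (j : ℝ) ^ 2)) ∧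
    (∀ n : ℕ, (c.1 n).1 =
      {p : FB X | ∃ j i, 1 ≤ j ∧ j ≤ n + 1 ∧ 1 ≤ i ∧ i ≤ m j ∧
        p = (x j i, ((n : ℝ≥0) + 1)⁻¹)})

/-- `D` on representing chains: `sup_n inf_m H_q(F_n, G_m)`. -/
noncomputable def Dchain (c c' : Q.Chain) : ℝ :=
  sSup {t | ∃ n, t = sInf {s | ∃ m, s = Q.Hq (c.1 n) (c'.1 m)}}

/-- The quasi-metric `D` on `CBX`. -/
noncomputable def D (I J : Q.CBX) : ℝ := Q.Dchain (Quotient.out I) (Quotient.out J)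

/-- The topology induced by `D` on `CBX`. -/
def DTop : TopologicalSpace Q.CBX :=
  TopologicalSpace.generateFrom
    {s | ∃ (I : Q.CBX) (ε : ℝ), 0 < ε ∧ s = {J | Q.D I J < ε}}

/-- The hyperspace `K_0(X)` as a type. -/
def K0T : Type _ := {K : Set X // K.Nonempty ∧ @IsCompact X Q.tau K}

/-- The Vietoris topology on `K_0(X)`. -/
def vietoris : TopologicalSpace Q.K0T :=
  TopologicalSpace.generateFrom
    ({s | ∃ V : Set X, @IsOpen X Q.tau V ∧ s = {K : Q.K0T | (K.1 ∩ V).Nonempty}} ∪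
     {s | ∃ V : Set X, @IsOpen X Q.tau V ∧ s = {K : Q.K0T | K.1 ⊆ V}})

/-- The topology of the Hausdorff quasi-metric on `K_0(X)`. -/
def hdTop : TopologicalSpace Q.K0T :=
  TopologicalSpace.generateFrom
    {s | ∃ (K : Q.K0T) (ε : ℝ), 0 < ε ∧ s = {L : Q.K0T | Q.Hd K.1 L.1 < ε}}

/-- Round ideals of `(P_fin(BX), ≺_EM)`. -/
def IsRoundIdeal (I : Set (PFin X)) : Prop :=
  I.Nonempty ∧ (∀ F G : PFin X, Q.em F G → G ∈ I → F ∈ I) ∧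
  (∀ F ∈ I, ∀ G ∈ I, ∃ H ∈ I, Q.em F H ∧ Q.em G H)

end QuasiMetric

section Aux

lemma aux_fin {α : Type _} {B : Set α} (hB : B.Finite) (f : α → ℝ) :
    {s | ∃ b ∈ B, s = f b}.Finite :=
  (hB.image f).subset (by rintro x ⟨b, hb, rfl⟩; exact ⟨b, hb, rfl⟩)

lemma aux_ne {α : Type _} {B : Set α} (hB : B.Nonempty) (f : α → ℝ) :
    {s | ∃ b ∈ B, s = f b}.Nonempty := ⟨f hB.choose, hB.choose, hB.choose_spec, rfl⟩

end Aux

namespace QuasiMetric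

variable {X : Type _} (Q : QuasiMetric X)

lemma q_nonneg (a b : FB X) : 0 ≤ Q.q a b := by
  unfold q
  have h1 : (a.2 : ℝ) - b.2 ≤ |(a.2 : ℝ) - (b.2 : ℝ)| := le_abs_self _
  have h2 : |(a.2 : ℝ) - (b.2 : ℝ)| ≤ max (Q.d a.1 b.1) |(a.2 : ℝ) - (b.2 : ℝ)| :=
    le_max_right _ _
  linarith

lemma q_triangle (a b c : FB X) : Q.q a c ≤ Q.q a b + Q.q b c := by
  unfold q
  have hd := Q.triangle a.1 b.1 c.1
  have h1 : Q.d a.1 c.1 ≤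
      max (Q.d a.1 b.1) |(a.2 : ℝ) - (b.2 : ℝ)| + max (Q.d b.1 c.1) |(b.2 : ℝ) - (c.2 : ℝ)| :=
    le_trans hd (add_le_add (le_max_left _ _) (le_max_left _ _))
  have h2 : |(a.2 : ℝ) - (c.2 : ℝ)| ≤
      max (Q.d a.1 b.1) |(a.2 : ℝ) - (b.2 : ℝ)| + max (Q.d b.1 c.1) |(b.2 : ℝ) - (c.2 : ℝ)| :=
    le_trans (abs_sub_le _ _ _) (add_le_add (le_max_right _ _) (le_max_right _ _))
  have h3 := max_le h1 h2
  linarith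

lemma q_eq_zero_of_blt {a b : FB X} (h : Q.blt a b) : Q.q a b = 0 := by
  unfold blt at h
  unfold q
  have h0 : 0 ≤ Q.d a.1 b.1 := Q.nonneg _ _
  have habs : |(a.2 : ℝ) - (b.2 : ℝ)| = (a.2 : ℝ) - b.2 := abs_of_pos (by linarith)
  rw [habs, max_eq_right h.le]
  ring

lemma hq_nonneg (F G : PFin X) : 0 ≤ Q.Hq F G := by
  obtain ⟨b, hb⟩ := G.2.2
  have h1 : 0 ≤ sInf {s | ∃ a ∈ F.1, s = Q.q a b} :=
    le_csInf (aux_ne F.2.2 _) (by rintro t ⟨a, ha, rfl⟩; exact Q.q_nonneg a b)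
  have h2 : sInf {s | ∃ a ∈ F.1, s = Q.q a b} ≤
      sSup {t | ∃ b ∈ G.1, t = sInf {s | ∃ a ∈ F.1, s = Q.q a b}} :=
    le_csSup (aux_fin G.2.1 _).bddAbove ⟨b, hb, rfl⟩
  exact le_trans (le_trans h1 h2) (le_max_right _ _)

lemma hq_le (F G : PFin X) {B : ℝ} (h : ∀ a ∈ F.1, ∀ b ∈ G.1, Q.q a b ≤ B) :
    Q.Hq F G ≤ B := by
  obtain ⟨a0, ha0⟩ := F.2.2
  obtain ⟨b0, hb0⟩ := G.2.2
  apply max_le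
  · apply csSup_le (aux_ne F.2.2 _)
    rintro t ⟨a, ha, rfl⟩
    exact le_trans (csInf_le (aux_fin G.2.1 _).bddBelow ⟨b0, hb0, rfl⟩) (h a ha b0 hb0)
  · apply csSup_le (aux_ne G.2.2 _)
    rintro t ⟨b, hb, rfl⟩
    exact le_trans (csInf_le (aux_fin F.2.1 _).bddBelow ⟨a0, ha0, rfl⟩) (h a0 ha0 b hb)

lemma hq_eq_zero_of_em {F G : PFin X} (h : Q.em F G) : Q.Hq F G = 0 := by
  refine le_antisymm ?_ (Q.hq_nonneg F G)
  apply max_le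
  · apply csSup_le (aux_ne F.2.2 _)
    rintro t ⟨a, ha, rfl⟩
    obtain ⟨b, hb, hab⟩ := h.2 a ha
    calc sInf {s | ∃ b ∈ G.1, s = Q.q a b} ≤ Q.q a b :=
          csInf_le (aux_fin G.2.1 _).bddBelow ⟨b, hb, rfl⟩
      _ = 0 := Q.q_eq_zero_of_blt hab
  · apply csSup_le (aux_ne G.2.2 _)
    rintro t ⟨b, hb, rfl⟩
    obtain ⟨a, ha, hab⟩ := h.1 b hb
    calc sInf {s | ∃ a ∈ F.1, s = Q.q a b} ≤ Q.q a b :=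
          csInf_le (aux_fin F.2.1 _).bddBelow ⟨a, ha, rfl⟩
      _ = 0 := Q.q_eq_zero_of_blt hab

lemma hq_triangle (F G H : PFin X) : Q.Hq F H ≤ Q.Hq F G + Q.Hq G H := by
  apply max_le
  · apply csSup_le (aux_ne F.2.2 _)
    rintro t ⟨a, ha, rfl⟩
    obtain ⟨b0, hb0, hq0⟩ := (aux_ne G.2.2 (Q.q a)).csInf_mem (aux_fin G.2.1 (Q.q a))
    have h1 : Q.q a b0 ≤ Q.Hq F G := by
      rw [← hq0]
      exact le_trans (le_csSup (aux_fin F.2.1 _).bddAbove ⟨a, ha, rfl⟩) (le_max_left _ _)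
    obtain ⟨c0, hc0, hq1⟩ := (aux_ne H.2.2 (Q.q b0)).csInf_mem (aux_fin H.2.1 (Q.q b0))
    have h2 : Q.q b0 c0 ≤ Q.Hq G H := by
      rw [← hq1]
      exact le_trans (le_csSup (aux_fin G.2.1 _).bddAbove ⟨b0, hb0, rfl⟩) (le_max_left _ _)
    calc sInf {s | ∃ c ∈ H.1, s = Q.q a c} ≤ Q.q a c0 :=
          csInf_le (aux_fin H.2.1 _).bddBelow ⟨c0, hc0, rfl⟩
      _ ≤ Q.q a b0 + Q.q b0 c0 := Q.q_triangle a b0 c0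
      _ ≤ Q.Hq F G + Q.Hq G H := add_le_add h1 h2
  · apply csSup_le (aux_ne H.2.2 _)
    rintro t ⟨cc, hc, rfl⟩
    obtain ⟨b0, hb0, hq0⟩ :=
      (aux_ne G.2.2 (fun b => Q.q b cc)).csInf_mem (aux_fin G.2.1 (fun b => Q.q b cc))
    have h2 : Q.q b0 cc ≤ Q.Hq G H := by
      rw [← hq0]
      exact le_trans (le_csSup (aux_fin H.2.1 _).bddAbove ⟨cc, hc, rfl⟩) (le_max_right _ _)
    obtain ⟨a0, ha0, hq1⟩ :=
      (aux_ne F.2.2 (fun a => Q.q a b0)).csInf_mem (aux_fin F.2.1 (fun a => Q.q a b0))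
    have h1 : Q.q a0 b0 ≤ Q.Hq F G := by
      rw [← hq1]
      exact le_trans (le_csSup (aux_fin G.2.1 _).bddAbove ⟨b0, hb0, rfl⟩) (le_max_right _ _)
    calc sInf {s | ∃ a ∈ F.1, s = Q.q a cc} ≤ Q.q a0 cc :=
          csInf_le (aux_fin F.2.1 _).bddBelow ⟨a0, ha0, rfl⟩
      _ ≤ Q.q a0 b0 + Q.q b0 cc := Q.q_triangle _ _ _
      _ ≤ _ := add_le_add h1 h2

lemma chain_em_succ (c : Q.Chain) (n : ℕ) : Q.em (c.1 0) (c.1 (n + 1)) := by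
  induction n with
  | zero => exact c.2 0
  | succ k ih => exact Q.em_trans ih (c.2 (k + 1))

lemma chain_radius_bound (c : Q.Chain) :
    ∃ R : ℝ, 0 ≤ R ∧ ∀ n, ∀ p ∈ (c.1 n).1, (p.2 : ℝ) ≤ R := by
  have hfin := aux_fin (c.1 0).2.1 (fun p : FB X => (p.2 : ℝ))
  refine ⟨sSup {t | ∃ p ∈ (c.1 0).1, t = ((p.2 : ℝ))}, ?_, ?_⟩
  · obtain ⟨p, hp⟩ := (c.1 0).2.2
    exact le_trans p.2.coe_nonneg (le_csSup hfin.bddAbove ⟨p, hp, rfl⟩)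
  · intro n p hp
    match n with
    | 0 => exact le_csSup hfin.bddAbove ⟨p, hp, rfl⟩
    | Nat.succ k =>
      obtain ⟨a, ha, hab⟩ := (Q.chain_em_succ c k).1 p hp
      have h0 := Q.nonneg a.1 p.1
      have h2 : (p.2 : ℝ) ≤ (a.2 : ℝ) := by unfold blt at hab; linarith
      exact le_trans h2 (le_csSup hfin.bddAbove ⟨a, ha, rfl⟩)

lemma q_le_bound {C : ℝ} (hC : ∀ x y, Q.d x y ≤ C) {R S : ℝ} {a b : FB X}
    (hr : (a.2 : ℝ) ≤ R) (hs : (b.2 : ℝ) ≤ S) (hR : 0 ≤ R) (hS : 0 ≤ S) :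
    Q.q a b ≤ max C 0 + R + 2 * S := by
  unfold q
  have ha0 : (0 : ℝ) ≤ a.2 := a.2.coe_nonneg
  have hb0 : (0 : ℝ) ≤ b.2 := b.2.coe_nonneg
  have h1 : Q.d a.1 b.1 ≤ max C 0 := le_trans (hC _ _) (le_max_left _ _)
  have h2 : |(a.2 : ℝ) - (b.2 : ℝ)| ≤ R + S := abs_le.2 ⟨by linarith, by linarith⟩
  have hm0 : (0 : ℝ) ≤ max C 0 := le_max_right _ _
  have hm : max (Q.d a.1 b.1) |(a.2 : ℝ) - (b.2 : ℝ)| ≤ max C 0 + (R + S) := by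
    apply max_le <;> linarith
  linarith

lemma hq_bound (hB : Q.Bounded) (c c' : Q.Chain) :
    ∃ B : ℝ, ∀ n m, Q.Hq (c.1 n) (c'.1 m) ≤ B := by
  obtain ⟨C, hC⟩ := hB
  obtain ⟨R, hR0, hR⟩ := Q.chain_radius_bound c
  obtain ⟨S, hS0, hS⟩ := Q.chain_radius_bound c'
  exact ⟨max C 0 + R + 2 * S, fun n m => Q.hq_le _ _ (fun a ha b hb =>
    Q.q_le_bound hC (hR n a ha) (hS m b hb) hR0 hS0)⟩

lemma inner_bddBelow (c c' : Q.Chain) (n : ℕ) :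
    BddBelow {s | ∃ m, s = Q.Hq (c.1 n) (c'.1 m)} :=
  ⟨0, by rintro s ⟨m, rfl⟩; exact Q.hq_nonneg _ _⟩

lemma le_dchain (hB : Q.Bounded) (c c' : Q.Chain) (n : ℕ) :
    sInf {s | ∃ m, s = Q.Hq (c.1 n) (c'.1 m)} ≤ Q.Dchain c c' := by
  obtain ⟨B, hBnd⟩ := Q.hq_bound hB c c'
  unfold Dchain
  refine le_csSup ?_ ⟨n, rfl⟩
  refine ⟨B, ?_⟩
  rintro t ⟨n', rfl⟩
  exact le_trans (csInf_le (Q.inner_bddBelow c c' n') ⟨0, rfl⟩) (hBnd n' 0)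

lemma inner_ne (c c' : Q.Chain) (n : ℕ) :
    {s | ∃ m, s = Q.Hq (c.1 n) (c'.1 m)}.Nonempty := ⟨Q.Hq (c.1 n) (c'.1 0), 0, rfl⟩

lemma dchain_nonneg (hB : Q.Bounded) (c c' : Q.Chain) : 0 ≤ Q.Dchain c c' :=
  le_trans (le_csInf (Q.inner_ne c c' 0) (by rintro s ⟨m, rfl⟩; exact Q.hq_nonneg _ _))
    (Q.le_dchain hB c c' 0)

lemma dchain_triangle (hB : Q.Bounded) (c c' c'' : Q.Chain) :
    Q.Dchain c c'' ≤ Q.Dchain c c' + Q.Dchain c' c'' := by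
  unfold Dchain
  refine csSup_le ?_ ?_
  · exact ⟨_, 0, rfl⟩
  rintro t ⟨n, rfl⟩
  apply le_of_forall_pos_le_add
  intro ε hε
  have h1 : sInf {s | ∃ m, s = Q.Hq (c.1 n) (c'.1 m)} < Q.Dchain c c' + ε / 2 :=
    lt_of_le_of_lt (Q.le_dchain hB c c' n) (by linarith)
  obtain ⟨s, ⟨m, rfl⟩, hs⟩ := (csInf_lt_iff (Q.inner_bddBelow c c' n) (Q.inner_ne c c' n)).1 h1
  have h2 : sInf {s | ∃ k, s = Q.Hq (c'.1 m) (c''.1 k)} < Q.Dchain c' c'' + ε / 2 :=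
    lt_of_le_of_lt (Q.le_dchain hB c' c'' m) (by linarith)
  obtain ⟨s2, ⟨k, rfl⟩, hs2⟩ := (csInf_lt_iff (Q.inner_bddBelow c' c'' m) (Q.inner_ne c' c'' m)).1 h2
  calc sInf {s | ∃ k, s = Q.Hq (c.1 n) (c''.1 k)} ≤ Q.Hq (c.1 n) (c''.1 k) :=
        csInf_le (Q.inner_bddBelow c c'' n) ⟨k, rfl⟩
    _ ≤ Q.Hq (c.1 n) (c'.1 m) + Q.Hq (c'.1 m) (c''.1 k) := Q.hq_triangle _ _ _
    _ ≤ Q.Dchain c c' + Q.Dchain c' c'' + ε := by linarith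

lemma blt_of_q_lt {a b g : FB X} {δ : ℝ}
    (hab : Q.d a.1 b.1 ≤ ((a.2 : ℝ) - (b.2 : ℝ)) - δ) (hq : Q.q b g < δ) : Q.blt a g := by
  unfold q at hq
  unfold blt
  have h1 : Q.d b.1 g.1 ≤ max (Q.d b.1 g.1) |(b.2 : ℝ) - (g.2 : ℝ)| := le_max_left _ _
  have h2 := Q.triangle a.1 b.1 g.1
  linarith

lemma dchain_eq_zero_iff (hB : Q.Bounded) (c c' : Q.Chain) :
    Q.Dchain c c' = 0 ↔ Q.chainLE c c' := by
  constructor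
  · intro h0 n
    have hFF' : Q.em (c.1 n) (c.1 (n + 1)) := c.2 n
    -- the set of slacks of `≺`-related pairs
    set B : Set (FB X × FB X) :=
      {p | p.1 ∈ (c.1 n).1 ∧ p.2 ∈ (c.1 (n + 1)).1 ∧ Q.blt p.1 p.2} with hBdef
    have hBfin : B.Finite :=
      ((c.1 n).2.1.prod (c.1 (n + 1)).2.1).subset (fun p hp => ⟨hp.1, hp.2.1⟩)
    have hBne : B.Nonempty := by
      obtain ⟨b, hb⟩ := (c.1 (n + 1)).2.2
      obtain ⟨a, ha, hab⟩ := hFF'.1 b hb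
      exact ⟨(a, b), ha, hb, hab⟩
    set f : FB X × FB X → ℝ := fun p => ((p.1.2 : ℝ) - (p.2.2 : ℝ)) - Q.d p.1.1 p.2.1 with hf
    set δ := sInf {t | ∃ p ∈ B, t = f p} with hδ
    have hδmem : δ ∈ {t | ∃ p ∈ B, t = f p} := (aux_ne hBne f).csInf_mem (aux_fin hBfin f)
    have hδpos : 0 < δ := by
      obtain ⟨p, hp, hpe⟩ := hδmem
      have := hp.2.2
      unfold blt at this
      rw [hpe]
      simp only [hf]
      linarith
    have hδle : ∀ a ∈ (c.1 n).1, ∀ b ∈ (c.1 (n + 1)).1, Q.blt a b →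
        Q.d a.1 b.1 ≤ ((a.2 : ℝ) - (b.2 : ℝ)) - δ := by
      intro a ha b hb hab
      have := csInf_le (aux_fin hBfin f).bddBelow (⟨(a, b), ⟨ha, hb, hab⟩, rfl⟩ :
        f (a, b) ∈ {t | ∃ p ∈ B, t = f p})
      rw [← hδ] at this
      simp only [hf] at this
      linarith
    have hin : sInf {s | ∃ m, s = Q.Hq (c.1 (n + 1)) (c'.1 m)} < δ :=
      lt_of_le_of_lt (le_of_le_of_eq (Q.le_dchain hB c c' (n + 1)) h0) hδpos
    obtain ⟨s, ⟨m, rfl⟩, hm⟩ :=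
      (csInf_lt_iff (Q.inner_bddBelow c c' (n + 1)) (Q.inner_ne c c' (n + 1))).1 hin
    refine ⟨m, ?_, ?_⟩
    · -- every g ∈ G has a ≺-predecessor in F
      intro g hg
      have hle : sInf {s | ∃ b ∈ (c.1 (n + 1)).1, s = Q.q b g} < δ :=
        lt_of_le_of_lt
          (le_trans (le_csSup (aux_fin (c'.1 m).2.1 _).bddAbove ⟨g, hg, rfl⟩)
            (le_max_right _ _)) hm
      obtain ⟨s, ⟨b, hb, rfl⟩, hqb⟩ :=
        (csInf_lt_iff (aux_fin (c.1 (n + 1)).2.1 _).bddBelow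
          (aux_ne (c.1 (n + 1)).2.2 _)).1 hle
      obtain ⟨a, ha, hab⟩ := hFF'.1 b hb
      exact ⟨a, ha, Q.blt_of_q_lt (hδle a ha b hb hab) hqb⟩
    · -- every a ∈ F has a ≺-successor in G
      intro a ha
      obtain ⟨b, hb, hab⟩ := hFF'.2 a ha
      have hle : sInf {s | ∃ g ∈ (c'.1 m).1, s = Q.q b g} < δ :=
        lt_of_le_of_lt
          (le_trans (le_csSup (aux_fin (c.1 (n + 1)).2.1 _).bddAbove ⟨b, hb, rfl⟩)
            (le_max_left _ _)) hm
      obtain ⟨s, ⟨g, hg, rfl⟩, hqg⟩ :=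
        (csInf_lt_iff (aux_fin (c'.1 m).2.1 _).bddBelow (aux_ne (c'.1 m).2.2 _)).1 hle
      exact ⟨g, hg, Q.blt_of_q_lt (hδle a ha b hb hab) hqg⟩
  · intro h
    refine le_antisymm ?_ (Q.dchain_nonneg hB c c')
    unfold Dchain
    refine csSup_le ?_ ?_
    · exact ⟨_, 0, rfl⟩
    rintro t ⟨n, rfl⟩
    obtain ⟨m, hm⟩ := h n
    exact le_trans (csInf_le (Q.inner_bddBelow c c' n) ⟨m, rfl⟩)
      (le_of_eq (Q.hq_eq_zero_of_em hm))

lemma D_eq_zero_iff (hB : Q.Bounded) (I J : Q.CBX) : Q.D I J = 0 ↔ Q.cbLE I J := by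
  have h := Q.dchain_eq_zero_iff hB (Quotient.out I) (Quotient.out J)
  have hc : Q.cbLE I J ↔ Q.chainLE (Quotient.out I) (Quotient.out J) := by
    conv_lhs => rw [← Quotient.out_eq I, ← Quotient.out_eq J]
    exact Iff.rfl
  exact h.trans hc.symm

end QuasiMetric

/-- `D` is a quasi-metric on `CBX` whose specialization order coincides with
the partial order `⊑` of `CBX`. -/
theorem stmt14 {X : Type} (Q : QuasiMetric X) (hT1 : Q.IsT1) (hB : Q.Bounded)
    (hY : Q.SeqYonedaComplete) :
    (∀ I J K : Q.CBX, Q.D I K ≤ Q.D I J + Q.D J K) ∧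
    (∀ I J : Q.CBX, Q.D I J = 0 → Q.D J I = 0 → I = J) ∧
    (∀ I J : Q.CBX, Q.D I J = 0 ↔ Q.cbLE I J) := by
  refine ⟨fun I J K => Q.dchain_triangle hB _ _ _, fun I J h1 h2 => ?_,
    fun I J => Q.D_eq_zero_iff hB I J⟩
  have l1 := (Q.dchain_eq_zero_iff hB _ _).1 h1
  have l2 := (Q.dchain_eq_zero_iff hB _ _).1 h2
  rw [← Quotient.out_eq I, ← Quotient.out_eq J]
  exact Quotient.sound ⟨l1, l2⟩
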